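/- Let X be a streak in which subtraction is total, i.e., for all a, b ∈ X there exists x ∈ X with a + x = b. Then there exists a unique total multiplication on X extending the given multiplication on positive elements which makes X into a ring streak (a commutative unital ring whose multiplication satisfies the multiplicity condition: b < a and d < c imply a·d + b·c < a·c + b·d). -/

import Mathlib

/-- A prestreak: a strict order (asymmetric and cotransitive) together with a
commutative additive monoid structure and a commutative multiplicative monoid
structure on the positive part, compatible with the order.  (The intrinsic
topology conditions of the paper are omitted, being vacuous in the classical
set-theoretic setting.) -/
structure Prestreak (X : Type*) where
  lt : X → X → Prop
  add : X → X → X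
  zero : X
  mul : X → X → X
  one : X
  lt_asymm : ∀ a b, ¬ (lt a b ∧ lt b a)
  lt_cotrans : ∀ a b x, lt a b → lt a x ∨ lt x b
  add_comm : ∀ a b, add a b = add b a
  add_assoc : ∀ a b c, add (add a b) c = add a (add b c)
  add_zero : ∀ a, add a zero = a
  zero_lt_one : lt zero one
  mul_pos : ∀ a b, lt zero a → lt zero b → lt zero (mul a b)
  mul_comm : ∀ a b, lt zero a → lt zero b → mul a b = mul b a
  mul_assoc : ∀ a b c, lt zero a → lt zero b → lt zero c →
    mul (mul a b) c = mul a (mul b c)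
  mul_one : ∀ a, lt zero a → mul a one = a
  mul_add : ∀ a b c, lt zero a → lt zero b → lt zero c →
    mul (add a b) c = add (mul a c) (mul b c)
  add_lt_add_iff : ∀ a b x, (lt (add a x) (add b x) ↔ lt a b)
  mul_lt_mul_iff : ∀ a b x, lt zero a → lt zero b → lt zero x →
    (lt (mul a x) (mul b x) ↔ lt a b)

namespace Prestreak

variable {X : Type*}

/-- Multiplication by a natural number: `0·a = 0`, `(n+1)·a = n·a + a`. -/
def nsmul (P : Prestreak X) : ℕ → X → X
  | 0, _ => P.zero
  | n + 1, a => P.add (nsmul P n a) a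

/-- The canonical image of a natural number, `n ↦ n·1`. -/
def ofNat (P : Prestreak X) (n : ℕ) : X := P.nsmul n P.one

/-- Comparison `x < q` of an element of a prestreak with a rational number,
using the canonical representation `q = (q.num⁺ − q.num⁻)/q.den`:
`x < (a−b)/c  :=  c·x + b < a`. -/
def ltQ (P : Prestreak X) (x : X) (q : ℚ) : Prop :=
  P.lt (P.add (P.nsmul q.den x) (P.ofNat ((-q.num).toNat))) (P.ofNat q.num.toNat)

/-- Comparison `q < x` of a rational with an element of a prestreak:
`(a−b)/c < x  :=  a < c·x + b`. -/
def qLt (P : Prestreak X) (q : ℚ) (x : X) : Prop :=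
  P.lt (P.ofNat q.num.toNat) (P.add (P.nsmul q.den x) (P.ofNat ((-q.num).toNat)))

/-- The archimedean property for prestreaks. -/
def Archimedean (P : Prestreak X) : Prop :=
  ∀ a b c d : X, P.lt b d →
    ∃ n : ℕ, P.lt (P.add a (P.nsmul n b)) (P.add c (P.nsmul n d))

/-- Tightness: antisymmetry of `≤` (where `a ≤ b := ¬ b < a`).
A streak is a tight archimedean prestreak. -/
def Tight (P : Prestreak X) : Prop :=
  ∀ a b : X, ¬ P.lt a b → ¬ P.lt b a → a = b

/-- The apartness relation `a # b := a < b ∨ b < a`. -/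
def Apart (P : Prestreak X) (a b : X) : Prop := P.lt a b ∨ P.lt b a

/-- A morphism of prestreaks: preserves `<`, `+`, `0`, `1` and products of
positive elements. -/
def IsHom {Y : Type*} (P : Prestreak X) (Q : Prestreak Y) (f : X → Y) : Prop :=
  (∀ a b, P.lt a b → Q.lt (f a) (f b)) ∧
  (∀ a b, f (P.add a b) = Q.add (f a) (f b)) ∧
  f P.zero = Q.zero ∧ f P.one = Q.one ∧
  (∀ a b, P.lt P.zero a → P.lt P.zero b → f (P.mul a b) = Q.mul (f a) (f b))

/-- A multiplicative structure on a prestreak: a total multiplication which is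
commutative, associative, distributes over addition, has unit `1`, restricts to
the given multiplication on positive elements, and satisfies the multiplicity
condition. -/
def IsMultiplicative (P : Prestreak X) (tmul : X → X → X) : Prop :=
  (∀ a b, tmul a b = tmul b a) ∧
  (∀ a b c, tmul (tmul a b) c = tmul a (tmul b c)) ∧
  (∀ a b c, tmul (P.add a b) c = P.add (tmul a c) (tmul b c)) ∧
  (∀ a, tmul a P.one = a) ∧
  (∀ a b, P.lt P.zero a → P.lt P.zero b → tmul a b = P.mul a b) ∧
  (∀ a b c d, P.lt b a → P.lt d c →
    P.lt (P.add (tmul a d) (tmul b c)) (P.add (tmul a c) (tmul b d)))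

end Prestreak

namespace StreakAux

variable {X : Type*} (P : Prestreak X)

theorem ltIrrefl (a : X) : ¬ P.lt a a := fun h => P.lt_asymm a a ⟨h, h⟩

theorem ltTrans {a b c : X} (h1 : P.lt a b) (h2 : P.lt b c) : P.lt a c := by
  rcases P.lt_cotrans a b c h1 with h | h
  · exact h
  · exact absurd ⟨h2, h⟩ (P.lt_asymm b c)

theorem zeroAdd (a : X) : P.add P.zero a = a := by rw [P.add_comm, P.add_zero]

theorem addLeftComm (a b c : X) : P.add a (P.add b c) = P.add b (P.add a c) := by
  rw [← P.add_assoc, P.add_comm a b, P.add_assoc]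

theorem cancelR (hT : P.Tight) {a b : X} (x : X) (h : P.add a x = P.add b x) : a = b := by
  refine hT a b (fun hlt => ?_) (fun hlt => ?_)
  · have h2 := (P.add_lt_add_iff a b x).2 hlt
    rw [h] at h2; exact ltIrrefl P _ h2
  · have h2 := (P.add_lt_add_iff b a x).2 hlt
    rw [h] at h2; exact ltIrrefl P _ h2

theorem cancelL (hT : P.Tight) {a b : X} (x : X) (h : P.add x a = P.add x b) : a = b :=
  cancelR P hT x (by rwa [P.add_comm a x, P.add_comm b x])

theorem ltAddIff {a x : X} : P.lt a (P.add a x) ↔ P.lt P.zero x := by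
  rw [P.add_comm a x]
  have h := P.add_lt_add_iff P.zero x a
  rwa [zeroAdd] at h

theorem addPos {a b : X} (ha : P.lt P.zero a) (hb : P.lt P.zero b) :
    P.lt P.zero (P.add a b) :=
  ltTrans P ha ((ltAddIff P).2 hb)

theorem nsmulZero (n : ℕ) : P.nsmul n P.zero = P.zero := by
  induction n with
  | zero => rfl
  | succ n ih => show P.add (P.nsmul n P.zero) P.zero = P.zero; rw [ih, P.add_zero]

theorem nsmulOnePos (n : ℕ) : P.lt P.zero (P.nsmul (n+1) P.one) := by
  induction n with
  | zero =>
      show P.lt P.zero (P.add (P.nsmul 0 P.one) P.one)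
      show P.lt P.zero (P.add P.zero P.one)
      rw [zeroAdd]; exact P.zero_lt_one
  | succ n ih =>
      show P.lt P.zero (P.add (P.nsmul (n+1) P.one) P.one)
      exact addPos P ih P.zero_lt_one

theorem existsRepr (hA : P.Archimedean) (a : X) :
    ∃ p q : X, P.lt P.zero p ∧ P.lt P.zero q ∧ P.add a q = p := by
  obtain ⟨n, hn⟩ := hA P.zero P.zero a P.one P.zero_lt_one
  rw [nsmulZero, P.add_zero] at hn
  refine ⟨P.add a (P.nsmul (n+1) P.one), P.nsmul (n+1) P.one, ?_, nsmulOnePos P n, rfl⟩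
  have h2 : P.lt (P.add a (P.nsmul n P.one)) (P.add a (P.nsmul (n+1) P.one)) := by
    show P.lt _ (P.add a (P.add (P.nsmul n P.one) P.one))
    rw [← P.add_assoc]
    exact (ltAddIff P).2 P.zero_lt_one
  exact ltTrans P hn h2

noncomputable def psub (hsub : ∀ a b : X, ∃ x : X, P.add a x = b) (a b : X) : X :=
  (hsub a b).choose

theorem psubSpec (hsub : ∀ a b : X, ∃ x : X, P.add a x = b) (a b : X) :
    P.add a (psub P hsub a b) = b := (hsub a b).choose_spec

noncomputable def reprP (hA : P.Archimedean) (a : X) : X := (existsRepr P hA a).choose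

noncomputable def reprQ (hA : P.Archimedean) (a : X) : X :=
  (existsRepr P hA a).choose_spec.choose

theorem reprP_pos (hA : P.Archimedean) (a : X) : P.lt P.zero (reprP P hA a) :=
  (existsRepr P hA a).choose_spec.choose_spec.1

theorem reprQ_pos (hA : P.Archimedean) (a : X) : P.lt P.zero (reprQ P hA a) :=
  (existsRepr P hA a).choose_spec.choose_spec.2.1

theorem repr_eq (hA : P.Archimedean) (a : X) :
    P.add a (reprQ P hA a) = reprP P hA a :=
  (existsRepr P hA a).choose_spec.choose_spec.2.2

/-- `tmul a b = (p·r + q·s) − (p·s + q·r)` for the chosen representations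
`a = p − q`, `b = r − s`. -/
noncomputable def tmul (hA : P.Archimedean) (hsub : ∀ a b : X, ∃ x : X, P.add a x = b)
    (a b : X) : X :=
  psub P hsub
    (P.add (P.mul (reprP P hA a) (reprQ P hA b)) (P.mul (reprQ P hA a) (reprP P hA b)))
    (P.add (P.mul (reprP P hA a) (reprP P hA b)) (P.mul (reprQ P hA a) (reprQ P hA b)))

theorem tmulSpec0 (hA : P.Archimedean) (hsub : ∀ a b : X, ∃ x : X, P.add a x = b)
    (a b : X) :
    P.add (P.add (P.mul (reprP P hA a) (reprQ P hA b)) (P.mul (reprQ P hA a) (reprP P hA b)))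
        (tmul P hA hsub a b)
      = P.add (P.mul (reprP P hA a) (reprP P hA b)) (P.mul (reprQ P hA a) (reprQ P hA b)) :=
  psubSpec P hsub _ _

theorem stepA {p q p' q' r s : X}
    (hp : P.lt P.zero p) (hq : P.lt P.zero q) (hp' : P.lt P.zero p')
    (hq' : P.lt P.zero q') (hr : P.lt P.zero r) (hs : P.lt P.zero s)
    (h : P.add p q' = P.add p' q) :
    P.add (P.add (P.mul p s) (P.mul q r)) (P.add (P.mul p' r) (P.mul q' s))
      = P.add (P.add (P.mul p r) (P.mul q s)) (P.add (P.mul p' s) (P.mul q' r)) := by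
  have e1 : P.add (P.mul p r) (P.mul q' r) = P.add (P.mul p' r) (P.mul q r) := by
    have h2 := congrArg (fun x => P.mul x r) h
    rwa [P.mul_add p q' r hp hq' hr, P.mul_add p' q r hp' hq hr] at h2
  have e2 : P.add (P.mul p s) (P.mul q' s) = P.add (P.mul p' s) (P.mul q s) := by
    have h2 := congrArg (fun x => P.mul x s) h
    rwa [P.mul_add p q' s hp hq' hs, P.mul_add p' q s hp' hq hs] at h2
  have e := congrArg₂ P.add e2 e1.symm
  exact Eq.trans (by simp only [P.add_comm, P.add_assoc, addLeftComm P])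
    (Eq.trans e (by simp only [P.add_comm, P.add_assoc, addLeftComm P]))

theorem stepB {p q r s r' s' : X}
    (hp : P.lt P.zero p) (hq : P.lt P.zero q) (hr : P.lt P.zero r)
    (hs : P.lt P.zero s) (hr' : P.lt P.zero r') (hs' : P.lt P.zero s')
    (h : P.add r s' = P.add r' s) :
    P.add (P.add (P.mul p s) (P.mul q r)) (P.add (P.mul p r') (P.mul q s'))
      = P.add (P.add (P.mul p r) (P.mul q s)) (P.add (P.mul p s') (P.mul q r')) := by
  have e3 : P.add (P.mul p r) (P.mul p s') = P.add (P.mul p r') (P.mul p s) := by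
    have h2 := congrArg (fun x => P.mul x p) h
    rw [P.mul_add r s' p hr hs' hp, P.mul_add r' s p hr' hs hp] at h2
    rwa [P.mul_comm r p hr hp, P.mul_comm s' p hs' hp, P.mul_comm r' p hr' hp,
      P.mul_comm s p hs hp] at h2
  have e4 : P.add (P.mul q r) (P.mul q s') = P.add (P.mul q r') (P.mul q s) := by
    have h2 := congrArg (fun x => P.mul x q) h
    rw [P.mul_add r s' q hr hs' hq, P.mul_add r' s q hr' hs hq] at h2
    rwa [P.mul_comm r q hr hq, P.mul_comm s' q hs' hq, P.mul_comm r' q hr' hq,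
      P.mul_comm s q hs hq] at h2
  have e := congrArg₂ P.add e3.symm e4
  exact Eq.trans (by simp only [P.add_comm, P.add_assoc, addLeftComm P])
    (Eq.trans e (by simp only [P.add_comm, P.add_assoc, addLeftComm P]))

theorem reprTrans (hT : P.Tight) {p q r s p' q' r' s' : X}
    (hp : P.lt P.zero p) (hq : P.lt P.zero q) (hr : P.lt P.zero r)
    (hs : P.lt P.zero s) (hp' : P.lt P.zero p') (hq' : P.lt P.zero q')
    (hr' : P.lt P.zero r') (hs' : P.lt P.zero s')
    (hpq : P.add p q' = P.add p' q) (hrs : P.add r s' = P.add r' s) :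
    P.add (P.add (P.mul p s) (P.mul q r)) (P.add (P.mul p' r') (P.mul q' s'))
      = P.add (P.add (P.mul p r) (P.mul q s)) (P.add (P.mul p' s') (P.mul q' r')) := by
  have A := stepA P hp hq hp' hq' hr hs hpq
  have B := stepB P hp' hq' hr hs hr' hs' hrs
  refine cancelL P hT (P.add (P.mul p' r) (P.mul q' s)) ?_
  calc P.add (P.add (P.mul p' r) (P.mul q' s))
        (P.add (P.add (P.mul p s) (P.mul q r)) (P.add (P.mul p' r') (P.mul q' s')))
      = P.add (P.add (P.add (P.mul p s) (P.mul q r)) (P.add (P.mul p' r) (P.mul q' s)))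
          (P.add (P.mul p' r') (P.mul q' s')) := by
        simp only [P.add_comm, P.add_assoc, addLeftComm P]
    _ = P.add (P.add (P.add (P.mul p r) (P.mul q s)) (P.add (P.mul p' s) (P.mul q' r)))
          (P.add (P.mul p' r') (P.mul q' s')) := by rw [A]
    _ = P.add (P.add (P.mul p r) (P.mul q s))
          (P.add (P.add (P.mul p' s) (P.mul q' r)) (P.add (P.mul p' r') (P.mul q' s'))) := by
        simp only [P.add_comm, P.add_assoc, addLeftComm P]
    _ = P.add (P.add (P.mul p r) (P.mul q s))
          (P.add (P.add (P.mul p' r) (P.mul q' s)) (P.add (P.mul p' s') (P.mul q' r'))) := by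
        rw [B]
    _ = P.add (P.add (P.mul p' r) (P.mul q' s))
          (P.add (P.add (P.mul p r) (P.mul q s)) (P.add (P.mul p' s') (P.mul q' r'))) := by
        simp only [P.add_comm, P.add_assoc, addLeftComm P]

theorem tmulSpec (hA : P.Archimedean) (hT : P.Tight)
    (hsub : ∀ a b : X, ∃ x : X, P.add a x = b) {a b p q r s : X}
    (hp : P.lt P.zero p) (hq : P.lt P.zero q) (hr : P.lt P.zero r)
    (hs : P.lt P.zero s) (ha : P.add a q = p) (hb : P.add b s = r) :
    P.add (P.add (P.mul p s) (P.mul q r)) (tmul P hA hsub a b)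
      = P.add (P.mul p r) (P.mul q s) := by
  have hpq : P.add p (reprQ P hA a) = P.add (reprP P hA a) q := by
    rw [← ha, ← repr_eq P hA a]
    simp only [P.add_comm, P.add_assoc, addLeftComm P]
  have hrs : P.add r (reprQ P hA b) = P.add (reprP P hA b) s := by
    rw [← hb, ← repr_eq P hA b]
    simp only [P.add_comm, P.add_assoc, addLeftComm P]
  have W := reprTrans P hT hp hq hr hs (reprP_pos P hA a) (reprQ_pos P hA a)
    (reprP_pos P hA b) (reprQ_pos P hA b) hpq hrs
  have T0 := tmulSpec0 P hA hsub a b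
  refine cancelL P hT
    (P.add (P.mul (reprP P hA a) (reprQ P hA b)) (P.mul (reprQ P hA a) (reprP P hA b))) ?_
  calc P.add (P.add (P.mul (reprP P hA a) (reprQ P hA b)) (P.mul (reprQ P hA a) (reprP P hA b)))
        (P.add (P.add (P.mul p s) (P.mul q r)) (tmul P hA hsub a b))
      = P.add (P.add (P.mul p s) (P.mul q r))
          (P.add (P.add (P.mul (reprP P hA a) (reprQ P hA b))
            (P.mul (reprQ P hA a) (reprP P hA b))) (tmul P hA hsub a b)) := by
        simp only [P.add_comm, P.add_assoc, addLeftComm P]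
    _ = P.add (P.add (P.mul p s) (P.mul q r))
          (P.add (P.mul (reprP P hA a) (reprP P hA b))
            (P.mul (reprQ P hA a) (reprQ P hA b))) := by rw [T0]
    _ = P.add (P.add (P.mul p r) (P.mul q s))
          (P.add (P.mul (reprP P hA a) (reprQ P hA b))
            (P.mul (reprQ P hA a) (reprP P hA b))) := by
        refine Eq.trans ?_ (Eq.trans W ?_) <;>
          simp only [P.add_comm, P.add_assoc, addLeftComm P]
    _ = P.add (P.add (P.mul (reprP P hA a) (reprQ P hA b)) (P.mul (reprQ P hA a) (reprP P hA b)))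
          (P.add (P.mul p r) (P.mul q s)) := by
        simp only [P.add_comm, P.add_assoc, addLeftComm P]

section Laws

variable (hA : P.Archimedean) (hT : P.Tight) (hsub : ∀ a b : X, ∃ x : X, P.add a x = b)

include hT

theorem tmulComm (a b : X) : tmul P hA hsub a b = tmul P hA hsub b a := by
  obtain ⟨p, q, hp, hq, ha⟩ := existsRepr P hA a
  obtain ⟨r, s, hr, hs, hb⟩ := existsRepr P hA b
  have h1 := tmulSpec P hA hT hsub hp hq hr hs ha hb
  have h2 := tmulSpec P hA hT hsub hr hs hp hq hb ha
  rw [P.mul_comm r q hr hq, P.mul_comm s p hs hp, P.mul_comm r p hr hp,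
    P.mul_comm s q hs hq] at h2
  refine cancelL P hT (P.add (P.mul p s) (P.mul q r)) ?_
  calc P.add (P.add (P.mul p s) (P.mul q r)) (tmul P hA hsub a b)
      = P.add (P.mul p r) (P.mul q s) := h1
    _ = P.add (P.add (P.mul q r) (P.mul p s)) (tmul P hA hsub b a) := by
        refine Eq.trans ?_ h2.symm
        simp only [P.add_comm, P.add_assoc, addLeftComm P]
    _ = P.add (P.add (P.mul p s) (P.mul q r)) (tmul P hA hsub b a) := by
        simp only [P.add_comm, P.add_assoc, addLeftComm P]

theorem tmulAdd (a b c : X) :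
    tmul P hA hsub (P.add a b) c = P.add (tmul P hA hsub a c) (tmul P hA hsub b c) := by
  obtain ⟨p, q, hp, hq, ha⟩ := existsRepr P hA a
  obtain ⟨p', q', hp', hq', hb⟩ := existsRepr P hA b
  obtain ⟨r, s, hr, hs, hc⟩ := existsRepr P hA c
  have hab : P.add (P.add a b) (P.add q q') = P.add p p' := by
    rw [← ha, ← hb]; simp only [P.add_comm, P.add_assoc, addLeftComm P]
  have h0 := tmulSpec P hA hT hsub (addPos P hp hp') (addPos P hq hq') hr hs hab hc
  rw [P.mul_add p p' s hp hp' hs, P.mul_add q q' r hq hq' hr,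
    P.mul_add p p' r hp hp' hr, P.mul_add q q' s hq hq' hs] at h0
  have h1 := tmulSpec P hA hT hsub hp hq hr hs ha hc
  have h2 := tmulSpec P hA hT hsub hp' hq' hr hs hb hc
  refine cancelL P hT (P.add (P.add (P.mul p s) (P.mul q r))
    (P.add (P.mul p' s) (P.mul q' r))) ?_
  calc P.add (P.add (P.add (P.mul p s) (P.mul q r)) (P.add (P.mul p' s) (P.mul q' r)))
        (tmul P hA hsub (P.add a b) c)
      = P.add (P.add (P.add (P.mul p s) (P.mul p' s)) (P.add (P.mul q r) (P.mul q' r)))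
          (tmul P hA hsub (P.add a b) c) := by
        simp only [P.add_comm, P.add_assoc, addLeftComm P]
    _ = P.add (P.add (P.mul p r) (P.mul p' r)) (P.add (P.mul q s) (P.mul q' s)) := h0
    _ = P.add (P.add (P.mul p r) (P.mul q s)) (P.add (P.mul p' r) (P.mul q' s)) := by
        simp only [P.add_comm, P.add_assoc, addLeftComm P]
    _ = P.add (P.add (P.add (P.mul p s) (P.mul q r)) (tmul P hA hsub a c))
          (P.add (P.add (P.mul p' s) (P.mul q' r)) (tmul P hA hsub b c)) := by
        rw [h1, h2]
    _ = P.add (P.add (P.add (P.mul p s) (P.mul q r)) (P.add (P.mul p' s) (P.mul q' r)))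
          (P.add (tmul P hA hsub a c) (tmul P hA hsub b c)) := by
        simp only [P.add_comm, P.add_assoc, addLeftComm P]

theorem tmulOne (a : X) : tmul P hA hsub a P.one = a := by
  obtain ⟨p, q, hp, hq, ha⟩ := existsRepr P hA a
  have h11 : P.lt P.zero (P.add P.one P.one) := addPos P P.zero_lt_one P.zero_lt_one
  have h := tmulSpec P hA hT hsub hp hq h11 P.zero_lt_one ha rfl
  rw [P.mul_one p hp, P.mul_one q hq] at h
  have e1 : P.mul q (P.add P.one P.one) = P.add q q := by
    rw [P.mul_comm q _ hq h11, P.mul_add _ _ _ P.zero_lt_one P.zero_lt_one hq,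
      P.mul_comm P.one q P.zero_lt_one hq, P.mul_one q hq]
  have e2 : P.mul p (P.add P.one P.one) = P.add p p := by
    rw [P.mul_comm p _ hp h11, P.mul_add _ _ _ P.zero_lt_one P.zero_lt_one hp,
      P.mul_comm P.one p P.zero_lt_one hp, P.mul_one p hp]
  rw [e1, e2] at h
  refine cancelL P hT (P.add (P.add p q) q) ?_
  calc P.add (P.add (P.add p q) q) (tmul P hA hsub a P.one)
      = P.add (P.add p (P.add q q)) (tmul P hA hsub a P.one) := by
        simp only [P.add_comm, P.add_assoc, addLeftComm P]
    _ = P.add (P.add p p) q := h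
    _ = P.add (P.add p q) (P.add a q) := by
        rw [← ha]; simp only [P.add_comm, P.add_assoc, addLeftComm P]
    _ = P.add (P.add (P.add p q) q) a := by
        simp only [P.add_comm, P.add_assoc, addLeftComm P]

theorem tmulExt {a b : X} (ha : P.lt P.zero a) (hb : P.lt P.zero b) :
    tmul P hA hsub a b = P.mul a b := by
  have ha1 : P.lt P.zero (P.add a P.one) := addPos P ha P.zero_lt_one
  have hb1 : P.lt P.zero (P.add b P.one) := addPos P hb P.zero_lt_one
  have h := tmulSpec P hA hT hsub ha1 P.zero_lt_one hb1 P.zero_lt_one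
    (rfl : P.add a P.one = P.add a P.one) (rfl : P.add b P.one = P.add b P.one)
  rw [P.mul_one _ ha1, P.mul_one P.one P.zero_lt_one] at h
  have e1 : P.mul P.one (P.add b P.one) = P.add b P.one := by
    rw [P.mul_comm P.one _ P.zero_lt_one hb1, P.mul_one _ hb1]
  have e2 : P.mul (P.add a P.one) (P.add b P.one)
      = P.add (P.add (P.mul a b) a) (P.add b P.one) := by
    rw [P.mul_add a P.one _ ha P.zero_lt_one hb1,
      P.mul_comm a _ ha hb1, P.mul_add b P.one a hb P.zero_lt_one ha,
      P.mul_comm b a hb ha, P.mul_comm P.one a P.zero_lt_one ha, P.mul_one a ha,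
      P.mul_comm P.one _ P.zero_lt_one hb1, P.mul_one _ hb1]
  rw [e1, e2] at h
  refine cancelL P hT (P.add (P.add a P.one) (P.add b P.one)) ?_
  calc P.add (P.add (P.add a P.one) (P.add b P.one)) (tmul P hA hsub a b)
      = P.add (P.add (P.add (P.mul a b) a) (P.add b P.one)) P.one := h
    _ = P.add (P.add (P.add a P.one) (P.add b P.one)) (P.mul a b) := by
        simp only [P.add_comm, P.add_assoc, addLeftComm P]

theorem tmulAssoc (a b c : X) :
    tmul P hA hsub (tmul P hA hsub a b) c = tmul P hA hsub a (tmul P hA hsub b c) := by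
  obtain ⟨p, q, hp, hq, ha⟩ := existsRepr P hA a
  obtain ⟨r, s, hr, hs, hb⟩ := existsRepr P hA b
  obtain ⟨t, u, ht, hu, hc⟩ := existsRepr P hA c
  have hpr := P.mul_pos p r hp hr
  have hqs := P.mul_pos q s hq hs
  have hps := P.mul_pos p s hp hs
  have hqr := P.mul_pos q r hq hr
  have hrt := P.mul_pos r t hr ht
  have hsu := P.mul_pos s u hs hu
  have hru := P.mul_pos r u hr hu
  have hst := P.mul_pos s t hs ht
  have hab := tmulSpec P hA hT hsub hp hq hr hs ha hb
  have habR : P.add (tmul P hA hsub a b) (P.add (P.mul p s) (P.mul q r))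
      = P.add (P.mul p r) (P.mul q s) := (P.add_comm _ _).trans hab
  have hbc := tmulSpec P hA hT hsub hr hs ht hu hb hc
  have hbcR : P.add (tmul P hA hsub b c) (P.add (P.mul r u) (P.mul s t))
      = P.add (P.mul r t) (P.mul s u) := (P.add_comm _ _).trans hbc
  have h1 := tmulSpec P hA hT hsub (addPos P hpr hqs) (addPos P hps hqr) ht hu habR hc
  have h2 := tmulSpec P hA hT hsub hp hq (addPos P hrt hsu) (addPos P hru hst) ha hbcR
  -- expand h1
  have ePPu : P.mul (P.add (P.mul p r) (P.mul q s)) u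
      = P.add (P.mul p (P.mul r u)) (P.mul q (P.mul s u)) := by
    rw [P.mul_add _ _ _ hpr hqs hu, P.mul_assoc p r u hp hr hu, P.mul_assoc q s u hq hs hu]
  have eQQt : P.mul (P.add (P.mul p s) (P.mul q r)) t
      = P.add (P.mul p (P.mul s t)) (P.mul q (P.mul r t)) := by
    rw [P.mul_add _ _ _ hps hqr ht, P.mul_assoc p s t hp hs ht, P.mul_assoc q r t hq hr ht]
  have ePPt : P.mul (P.add (P.mul p r) (P.mul q s)) t
      = P.add (P.mul p (P.mul r t)) (P.mul q (P.mul s t)) := by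
    rw [P.mul_add _ _ _ hpr hqs ht, P.mul_assoc p r t hp hr ht, P.mul_assoc q s t hq hs ht]
  have eQQu : P.mul (P.add (P.mul p s) (P.mul q r)) u
      = P.add (P.mul p (P.mul s u)) (P.mul q (P.mul r u)) := by
    rw [P.mul_add _ _ _ hps hqr hu, P.mul_assoc p s u hp hs hu, P.mul_assoc q r u hq hr hu]
  rw [ePPu, eQQt, ePPt, eQQu] at h1
  -- expand h2
  have eP1 : P.mul p (P.add (P.mul r u) (P.mul s t))
      = P.add (P.mul p (P.mul r u)) (P.mul p (P.mul s t)) := by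
    rw [P.mul_comm p _ hp (addPos P hru hst), P.mul_add _ _ _ hru hst hp,
      P.mul_comm (P.mul r u) p hru hp, P.mul_comm (P.mul s t) p hst hp]
  have eQ1 : P.mul q (P.add (P.mul r t) (P.mul s u))
      = P.add (P.mul q (P.mul r t)) (P.mul q (P.mul s u)) := by
    rw [P.mul_comm q _ hq (addPos P hrt hsu), P.mul_add _ _ _ hrt hsu hq,
      P.mul_comm (P.mul r t) q hrt hq, P.mul_comm (P.mul s u) q hsu hq]
  have eP2 : P.mul p (P.add (P.mul r t) (P.mul s u))
      = P.add (P.mul p (P.mul r t)) (P.mul p (P.mul s u)) := by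
    rw [P.mul_comm p _ hp (addPos P hrt hsu), P.mul_add _ _ _ hrt hsu hp,
      P.mul_comm (P.mul r t) p hrt hp, P.mul_comm (P.mul s u) p hsu hp]
  have eQ2 : P.mul q (P.add (P.mul r u) (P.mul s t))
      = P.add (P.mul q (P.mul r u)) (P.mul q (P.mul s t)) := by
    rw [P.mul_comm q _ hq (addPos P hru hst), P.mul_add _ _ _ hru hst hq,
      P.mul_comm (P.mul r u) q hru hq, P.mul_comm (P.mul s t) q hst hq]
  rw [eP1, eQ1, eP2, eQ2] at h2
  refine cancelL P hT (P.add (P.add (P.mul p (P.mul r u)) (P.mul q (P.mul s u)))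
    (P.add (P.mul p (P.mul s t)) (P.mul q (P.mul r t)))) ?_
  calc P.add (P.add (P.add (P.mul p (P.mul r u)) (P.mul q (P.mul s u)))
        (P.add (P.mul p (P.mul s t)) (P.mul q (P.mul r t))))
        (tmul P hA hsub (tmul P hA hsub a b) c)
      = P.add (P.add (P.mul p (P.mul r t)) (P.mul q (P.mul s t)))
          (P.add (P.mul p (P.mul s u)) (P.mul q (P.mul r u))) := h1
    _ = P.add (P.add (P.mul p (P.mul r t)) (P.mul p (P.mul s u)))
          (P.add (P.mul q (P.mul r u)) (P.mul q (P.mul s t))) := by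
        simp only [P.add_comm, P.add_assoc, addLeftComm P]
    _ = P.add (P.add (P.add (P.mul p (P.mul r u)) (P.mul p (P.mul s t)))
          (P.add (P.mul q (P.mul r t)) (P.mul q (P.mul s u))))
          (tmul P hA hsub a (tmul P hA hsub b c)) := h2.symm
    _ = P.add (P.add (P.add (P.mul p (P.mul r u)) (P.mul q (P.mul s u)))
          (P.add (P.mul p (P.mul s t)) (P.mul q (P.mul r t))))
          (tmul P hA hsub a (tmul P hA hsub b c)) := by
        simp only [P.add_comm, P.add_assoc, addLeftComm P]

end Laws

section Laws2

variable (hA : P.Archimedean) (hT : P.Tight) (hsub : ∀ a b : X, ∃ x : X, P.add a x = b)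

include hT

theorem tmulAddR (x y z : X) :
    tmul P hA hsub x (P.add y z) = P.add (tmul P hA hsub x y) (tmul P hA hsub x z) := by
  rw [tmulComm P hA hT hsub x (P.add y z), tmulAdd P hA hT hsub,
    tmulComm P hA hT hsub y x, tmulComm P hA hT hsub z x]

theorem tmulMult {a b c d : X} (hba : P.lt b a) (hdc : P.lt d c) :
    P.lt (P.add (tmul P hA hsub a d) (tmul P hA hsub b c))
      (P.add (tmul P hA hsub a c) (tmul P hA hsub b d)) := by
  obtain ⟨e, he⟩ := hsub b a
  obtain ⟨f, hf⟩ := hsub d c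
  have he' : P.lt P.zero e := by
    rw [← he] at hba; exact (ltAddIff P).1 hba
  have hf' : P.lt P.zero f := by
    rw [← hf] at hdc; exact (ltAddIff P).1 hdc
  have hef : P.lt P.zero (tmul P hA hsub e f) := by
    rw [tmulExt P hA hT hsub he' hf']; exact P.mul_pos e f he' hf'
  rw [← he, ← hf]
  simp only [tmulAdd P hA hT hsub, tmulAddR P hA hT hsub]
  have key := (ltAddIff P (a := P.add (P.add (tmul P hA hsub b d) (tmul P hA hsub e d))
      (P.add (tmul P hA hsub b d) (tmul P hA hsub b f)))
      (x := tmul P hA hsub e f)).2 hef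
  have eq2 : P.add (P.add (P.add (tmul P hA hsub b d) (tmul P hA hsub e d))
        (P.add (tmul P hA hsub b d) (tmul P hA hsub b f))) (tmul P hA hsub e f)
      = P.add (P.add (P.add (tmul P hA hsub b d) (tmul P hA hsub b f))
          (P.add (tmul P hA hsub e d) (tmul P hA hsub e f))) (tmul P hA hsub b d) := by
    simp only [P.add_comm, P.add_assoc, addLeftComm P]
  rw [eq2] at key
  exact key

end Laws2

end StreakAux

/-- A streak with total subtraction carries a unique total multiplication
extending the one on positive elements and making it a ring streak (the
additive structure is already a commutative group by hypothesis, and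
`IsMultiplicative` expresses commutativity, associativity, distributivity,
unitality, the extension property and the multiplicity condition). -/
theorem streak_with_total_subtraction_is_ring {X : Type*} (P : Prestreak X)
    (hA : P.Archimedean) (hT : P.Tight)
    (hsub : ∀ a b : X, ∃ x : X, P.add a x = b) :
    ∃! tmul : X → X → X, P.IsMultiplicative tmul := by
  classical
  refine ⟨StreakAux.tmul P hA hsub,
    ⟨StreakAux.tmulComm P hA hT hsub, StreakAux.tmulAssoc P hA hT hsub,
     StreakAux.tmulAdd P hA hT hsub, StreakAux.tmulOne P hA hT hsub,
     fun a b ha hb => StreakAux.tmulExt P hA hT hsub ha hb,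
     fun a b c d hba hdc => StreakAux.tmulMult P hA hT hsub hba hdc⟩, ?_⟩
  intro tmul' H
  obtain ⟨Hcomm, Hassoc, Hadd, Hone, Hext, Hmult⟩ := H
  funext a b
  have HaddR : ∀ x y z, tmul' x (P.add y z) = P.add (tmul' x y) (tmul' x z) := by
    intro x y z; rw [Hcomm x (P.add y z), Hadd, Hcomm y x, Hcomm z x]
  obtain ⟨p, q, hp, hq, ha⟩ := StreakAux.existsRepr P hA a
  obtain ⟨r, s, hr, hs, hb⟩ := StreakAux.existsRepr P hA b
  have e1 : tmul' p r
      = P.add (P.add (tmul' a b) (tmul' a s)) (P.add (tmul' q b) (tmul' q s)) := by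
    rw [← ha, ← hb, Hadd, HaddR, HaddR]
  have e2 : tmul' p s = P.add (tmul' a s) (tmul' q s) := by rw [← ha, Hadd]
  have e3 : tmul' q r = P.add (tmul' q b) (tmul' q s) := by rw [← hb, HaddR]
  have spec' : P.add (P.add (P.mul p s) (P.mul q r)) (tmul' a b)
      = P.add (P.mul p r) (P.mul q s) := by
    rw [← Hext p s hp hs, ← Hext q r hq hr, ← Hext p r hp hr, ← Hext q s hq hs,
      e1, e2, e3]
    simp only [P.add_comm, P.add_assoc, StreakAux.addLeftComm P]
  exact StreakAux.cancelL P hT _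
    (spec'.trans (StreakAux.tmulSpec P hA hT hsub hp hq hr hs ha hb).symm)
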